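/- arXiv:1310.4375 — 2 statements merged into one kernel-verified Lean document; each statement's English description precedes it below -/
import Mathlib

section
/- If (u,v) ∈ ℝ_+^n × ℝ_+^m are positive vectors such that diag(u) K diag(v) ∈ U(a,b) where K = exp(-λM) entrywise with λ > 0, then T* = diag(u) K diag(v) is the unique minimizer of the regularized transport problem min_{T ∈ U(a,b)} ⟨T,M⟩ - (1/λ) h(T), where h(T) = -Σ_{ij} t_{ij} log t_{ij}. -/
open Finset

/-- Transportation polytope `U(a,b)`. -/
def transportPolytope {n m : ℕ} (a : Fin n → ℝ) (b : Fin m → ℝ) :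
    Set (Matrix (Fin n) (Fin m) ℝ) :=
  {T | (∀ i j, 0 ≤ T i j) ∧ (∀ i, ∑ j, T i j = a i) ∧ (∀ j, ∑ i, T i j = b j)}

/-- Frobenius inner product. -/
def frob {n m : ℕ} (T M : Matrix (Fin n) (Fin m) ℝ) : ℝ :=
  ∑ i, ∑ j, T i j * M i j

/-- Optimal transport cost `p(a,b,M)`. -/
noncomputable def otCost {n m : ℕ} (a : Fin n → ℝ) (b : Fin m → ℝ)
    (M : Matrix (Fin n) (Fin m) ℝ) : ℝ :=
  sInf ((fun T => frob T M) '' transportPolytope a b)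

/-- Entropy of a matrix, with the convention `0 * log 0 = 0`. -/
noncomputable def matEntropy {n m : ℕ} (T : Matrix (Fin n) (Fin m) ℝ) : ℝ :=
  ∑ i, ∑ j, Real.negMulLog (T i j)

/-- Pointwise Gibbs inequality: for `t ≥ 0`, `s > 0`,
`s - t + t log t - t log s ≥ 0`, strictly if `t ≠ s`. -/
lemma gibbs_ptwise (t s : ℝ) (ht : 0 ≤ t) (hs : 0 < s) :
    0 ≤ s - t + (t * Real.log t - t * Real.log s) ∧
    (t ≠ s → 0 < s - t + (t * Real.log t - t * Real.log s)) := by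
  rcases eq_or_lt_of_le ht with h0 | htpos
  · constructor
    · simp [← h0]; linarith
    · intro _; simp [← h0]; linarith
  · have hst : 0 < s / t := div_pos hs htpos
    have hexpr : s - t + (t * Real.log t - t * Real.log s)
        = s - t - t * Real.log (s / t) := by
      rw [Real.log_div (ne_of_gt hs) (ne_of_gt htpos)]; ring
    constructor
    · have h1 : Real.log (s / t) ≤ s / t - 1 := Real.log_le_sub_one_of_pos hst
      have h2 : t * Real.log (s / t) ≤ t * (s / t - 1) :=
        mul_le_mul_of_nonneg_left h1 ht
      have h3 : t * (s / t - 1) = s - t := by field_simp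
      rw [hexpr]; linarith
    · intro hne
      have hne1 : s / t ≠ 1 := by
        intro h; apply hne
        field_simp at h; linarith
      have h1 : Real.log (s / t) < s / t - 1 :=
        Real.log_lt_sub_one_of_pos hst hne1
      have h2 : t * Real.log (s / t) < t * (s / t - 1) :=
        (mul_lt_mul_iff_right₀ htpos).mpr h1
      have h3 : t * (s / t - 1) = s - t := by field_simp
      rw [hexpr]; linarith

theorem sinkhorn_form_unique_minimizer {n m : ℕ} (lam : ℝ) (hlam : 0 < lam)
    (a : Fin n → ℝ) (b : Fin m → ℝ)
    (ha : a ∈ stdSimplex ℝ (Fin n)) (hb : b ∈ stdSimplex ℝ (Fin m))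
    (hapos : ∀ i, 0 < a i) (hbpos : ∀ j, 0 < b j)
    (M : Matrix (Fin n) (Fin m) ℝ) (u : Fin n → ℝ) (v : Fin m → ℝ)
    (hu : ∀ i, 0 < u i) (hv : ∀ j, 0 < v j)
    (hfeas : (fun i j => u i * Real.exp (-lam * M i j) * v j) ∈ transportPolytope a b) :
    ∀ T ∈ transportPolytope a b,
      T ≠ (fun i j => u i * Real.exp (-lam * M i j) * v j) →
      frob (fun i j => u i * Real.exp (-lam * M i j) * v j) M
          - (1 / lam) * matEntropy (fun i j => u i * Real.exp (-lam * M i j) * v j)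
        < frob T M - (1 / lam) * matEntropy T := by
  intro T hT hne
  set S : Matrix (Fin n) (Fin m) ℝ :=
    (fun i j => u i * Real.exp (-lam * M i j) * v j) with hSdef
  obtain ⟨hT0, hTr, hTc⟩ := hT
  obtain ⟨hS0, hSr, hSc⟩ := hfeas
  have hSpos : ∀ i j, 0 < S i j := fun i j =>
    mul_pos (mul_pos (hu i) (Real.exp_pos _)) (hv j)
  have hlogS : ∀ i j, Real.log (S i j)
      = Real.log (u i) + (-lam * M i j) + Real.log (v j) := by
    intro i j
    rw [show S i j = u i * Real.exp (-lam * M i j) * v j from rfl,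
      Real.log_mul (mul_pos (hu i) (Real.exp_pos _)).ne' (ne_of_gt (hv j)),
      Real.log_mul (ne_of_gt (hu i)) (ne_of_lt (Real.exp_pos _)).symm,
      Real.log_exp]
  -- key identity for any P with the marginal constraints
  have key : ∀ P : Matrix (Fin n) (Fin m) ℝ,
      (∀ i, ∑ j, P i j = a i) → (∀ j, ∑ i, P i j = b j) →
      ∑ i, ∑ j, P i j * Real.log (S i j)
        = (∑ i, a i * Real.log (u i)) - lam * frob P M
          + ∑ j, b j * Real.log (v j) := by
    intro P hPr hPc
    have : ∀ i j, P i j * Real.log (S i j)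
        = P i j * Real.log (u i) + P i j * (-lam * M i j) + P i j * Real.log (v j) := by
      intro i j; rw [hlogS]; ring
    simp only [this, Finset.sum_add_distrib]
    have h1 : ∑ i, ∑ j, P i j * Real.log (u i) = ∑ i, a i * Real.log (u i) := by
      refine Finset.sum_congr rfl fun i _ => ?_
      rw [← Finset.sum_mul, hPr i]
    have h2 : ∑ i, ∑ j, P i j * (-lam * M i j) = -(lam * frob P M) := by
      rw [frob, Finset.mul_sum, ← Finset.sum_neg_distrib]
      refine Finset.sum_congr rfl fun i _ => ?_
      rw [Finset.mul_sum, ← Finset.sum_neg_distrib]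
      exact Finset.sum_congr rfl fun j _ => by ring
    have h3 : ∑ i, ∑ j, P i j * Real.log (v j) = ∑ j, b j * Real.log (v j) := by
      rw [Finset.sum_comm]
      refine Finset.sum_congr rfl fun j _ => ?_
      rw [← Finset.sum_mul, hPc j]
    rw [h1, h2, h3]; ring
  -- the relative-entropy sum is positive
  have hsumST : ∑ i, ∑ j, (S i j - T i j) = 0 := by
    have : (∑ i, ∑ j, S i j) = ∑ i, ∑ j, T i j := by
      rw [Finset.sum_congr rfl fun i _ => hSr i, Finset.sum_congr rfl fun i _ => hTr i]
    simp only [Finset.sum_sub_distrib]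
    linarith
  obtain ⟨i₀, j₀, hij⟩ : ∃ i j, T i j ≠ S i j := by
    by_contra h
    push_neg at h
    exact hne (funext fun i => funext fun j => h i j)
  have hpos : 0 < ∑ i, ∑ j,
      (S i j - T i j + (T i j * Real.log (T i j) - T i j * Real.log (S i j))) := by
    have hconv : ∀ (f : Fin n → Fin m → ℝ),
        (∑ i, ∑ j, f i j) = ∑ p : Fin n × Fin m, f p.1 p.2 := by
      intro f; rw [Fintype.sum_prod_type]
    rw [hconv]
    apply Finset.sum_pos'
    · intro p _
      exact (gibbs_ptwise (T p.1 p.2) (S p.1 p.2) (hT0 p.1 p.2) (hSpos p.1 p.2)).1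
    · exact ⟨(i₀, j₀), Finset.mem_univ _,
        (gibbs_ptwise (T i₀ j₀) (S i₀ j₀) (hT0 i₀ j₀) (hSpos i₀ j₀)).2 hij⟩
  have hD : 0 < ∑ i, ∑ j, (T i j * Real.log (T i j) - T i j * Real.log (S i j)) := by
    have hsplit : ∑ i, ∑ j,
        (S i j - T i j + (T i j * Real.log (T i j) - T i j * Real.log (S i j)))
        = (∑ i, ∑ j, (S i j - T i j))
          + ∑ i, ∑ j, (T i j * Real.log (T i j) - T i j * Real.log (S i j)) := by
      rw [← Finset.sum_add_distrib]
      refine Finset.sum_congr rfl fun i _ => ?_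
      rw [← Finset.sum_add_distrib]
    rw [hsplit, hsumST, zero_add] at hpos
    exact hpos
  -- entropy rewriting
  have hEnt : ∀ P : Matrix (Fin n) (Fin m) ℝ,
      matEntropy P = -∑ i, ∑ j, P i j * Real.log (P i j) := by
    intro P
    rw [matEntropy, ← Finset.sum_neg_distrib]
    refine Finset.sum_congr rfl fun i _ => ?_
    rw [← Finset.sum_neg_distrib]
    exact Finset.sum_congr rfl fun j _ => by rw [Real.negMulLog]; ring
  -- scaled objective
  have hObj : ∀ P : Matrix (Fin n) (Fin m) ℝ,
      (∀ i, ∑ j, P i j = a i) → (∀ j, ∑ i, P i j = b j) →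
      lam * (frob P M - (1 / lam) * matEntropy P)
        = (∑ i, ∑ j, (P i j * Real.log (P i j) - P i j * Real.log (S i j)))
          + ((∑ i, a i * Real.log (u i)) + ∑ j, b j * Real.log (v j)) := by
    intro P hPr hPc
    have hkey := key P hPr hPc
    have hsub : ∑ i, ∑ j, (P i j * Real.log (P i j) - P i j * Real.log (S i j))
        = (∑ i, ∑ j, P i j * Real.log (P i j)) - ∑ i, ∑ j, P i j * Real.log (S i j) := by
      simp only [Finset.sum_sub_distrib]
    rw [hsub, hkey, hEnt P]
    field_simp
    ring
  have hObjT := hObj T hTr hTc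
  have hObjS := hObj S hSr hSc
  have hSzero : ∑ i, ∑ j, (S i j * Real.log (S i j) - S i j * Real.log (S i j)) = 0 := by
    simp
  rw [hSzero, zero_add] at hObjS
  have : lam * (frob S M - (1 / lam) * matEntropy S)
      < lam * (frob T M - (1 / lam) * matEntropy T) := by
    rw [hObjT, hObjS]
    linarith
  exact lt_of_mul_lt_mul_left this (le_of_lt hlam)
end

section
/- Closest measure on a fixed support to a single target: given Y = (y_1,…,y_m) with weights b ∈ Σ_m, and a fixed support X = (x_1,…,x_n), the minimum over a ∈ Σ_n of p(a,b,M_{XY}) equals Σ_j b_j · min_i D(x_i,y_j)^p, attained by transporting all mass b_j to a nearest point of X. -/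
open Finset

theorem closest_measure_fixed_support {Ω : Type*} [MetricSpace Ω]
    {n m : ℕ} [NeZero n] (p : ℝ) (hp : 1 ≤ p)
    (X : Fin n → Ω) (Y : Fin m → Ω) (b : Fin m → ℝ) (hb : b ∈ stdSimplex ℝ (Fin m)) :
    IsLeast {c : ℝ | ∃ a ∈ stdSimplex ℝ (Fin n),
        c = otCost a b (fun i j => dist (X i) (Y j) ^ p)}
      (∑ j, b j * ⨅ i : Fin n, dist (X i) (Y j) ^ p) := by
  classical
  have hn : Nonempty (Fin n) := Fin.pos_iff_nonempty.mp (NeZero.pos n)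
  set M : Matrix (Fin n) (Fin m) ℝ := fun i j => dist (X i) (Y j) ^ p with hM
  set v : ℝ := ∑ j, b j * ⨅ i : Fin n, dist (X i) (Y j) ^ p with hv
  have hinf_le : ∀ (j : Fin m) (i : Fin n),
      (⨅ i : Fin n, dist (X i) (Y j) ^ p) ≤ dist (X i) (Y j) ^ p := fun j i =>
    ciInf_le (Finite.bddBelow_range _) i
  -- key lower bound: v ≤ frob T M for any T in any transportPolytope a b
  have key : ∀ (a : Fin n → ℝ), ∀ T ∈ transportPolytope a b, v ≤ frob T M := by
    intro a T hT
    obtain ⟨hpos, _, hcol⟩ := hT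
    have h1 : v ≤ ∑ j, ∑ i, T i j * M i j := by
      rw [hv]
      apply Finset.sum_le_sum
      intro j _
      have h2 : b j * (⨅ i : Fin n, dist (X i) (Y j) ^ p)
          = ∑ i, T i j * (⨅ i : Fin n, dist (X i) (Y j) ^ p) := by
        rw [← Finset.sum_mul, hcol j]
      rw [h2]
      exact Finset.sum_le_sum fun i _ =>
        mul_le_mul_of_nonneg_left (hinf_le j i) (hpos i j)
    calc v ≤ ∑ j, ∑ i, T i j * M i j := h1
      _ = frob T M := Finset.sum_comm.symm
  constructor
  · -- membership: build the nearest-point transport plan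
    have hmin : ∀ j : Fin m, ∃ i : Fin n, ∀ k, dist (X i) (Y j) ^ p ≤ dist (X k) (Y j) ^ p :=
      fun j => Finite.exists_min _
    choose near hnear using hmin
    have hinf_eq : ∀ j : Fin m,
        (⨅ i : Fin n, dist (X i) (Y j) ^ p) = dist (X (near j)) (Y j) ^ p := fun j =>
      le_antisymm (hinf_le j (near j)) (le_ciInf (hnear j))
    set T : Matrix (Fin n) (Fin m) ℝ := fun i j => if near j = i then b j else 0 with hT
    set a : Fin n → ℝ := fun i => ∑ j, T i j with ha
    have hTcol : ∀ j, ∑ i, T i j = b j := by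
      intro j; simp [hT]
    have haS : a ∈ stdSimplex ℝ (Fin n) := by
      constructor
      · intro i
        apply Finset.sum_nonneg
        intro j _
        simp only [hT]
        split <;> simp [hb.1 j]
      · rw [ha]
        rw [Finset.sum_comm]
        rw [Finset.sum_congr rfl fun j _ => hTcol j]
        exact hb.2
    have hTmem : T ∈ transportPolytope a b := by
      refine ⟨?_, fun i => rfl, hTcol⟩
      intro i j
      simp only [hT]
      split <;> simp [hb.1 j]
    have hfrob : frob T M = v := by
      unfold frob
      rw [Finset.sum_comm, hv]
      apply Finset.sum_congr rfl
      intro j _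
      rw [hinf_eq j]
      simp [hT, ite_mul, hM]
    refine ⟨a, haS, ?_⟩
    have : otCost a b M = v := by
      apply IsLeast.csInf_eq
      constructor
      · exact ⟨T, hTmem, hfrob⟩
      · rintro c ⟨T', hT', rfl⟩
        exact key a T' hT'
    exact this.symm
  · -- lower bound
    rintro c ⟨a, haS, rfl⟩
    apply le_csInf
    · refine ⟨frob (fun i j => a i * b j) M, ⟨fun i j => a i * b j, ?_, rfl⟩⟩
      refine ⟨fun i j => mul_nonneg (haS.1 i) (hb.1 j), fun i => ?_, fun j => ?_⟩
      · rw [← Finset.mul_sum, hb.2, mul_one]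
      · rw [← Finset.sum_mul, haS.2, one_mul]
    · rintro c ⟨T', hT', rfl⟩
      exact key a T' hT'
end
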